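/- For any fixed rational ρ, the set of Riordan arrays of the form (g^ρ, x·g) with g a unit power series with g(0)=1 is a subgroup of the Riordan group: it is closed under the Riordan product and contains the identity and inverses. In particular, if h is the compositional inverse of x·g, then the inverse of (g^ρ, x·g) is ((g∘h)^{-ρ}, h), which again has the required form. -/

import Mathlib

open PowerSeries

/-- Formal composition `f ∘ a` of power series (substituting `a`, assumed of
positive order, into `f`): the coefficient of `xⁿ` is `Σ_{k≤n} f_k·[xⁿ]aᵏ`. -/
noncomputable def pscomp (a f : PowerSeries ℂ) : PowerSeries ℂ :=
  PowerSeries.mk fun n =>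
    ∑ k ∈ Finset.range (n + 1), PowerSeries.coeff k f * PowerSeries.coeff n (a ^ k)

/-- The Riordan product `(g,f)*(h,ℓ) = (g·(h∘f), ℓ∘f)`. -/
noncomputable def rprod (p q : PowerSeries ℂ × PowerSeries ℂ) :
    PowerSeries ℂ × PowerSeries ℂ :=
  (p.1 * pscomp p.2 q.1, pscomp p.2 q.2)

/-- The formal binomial series `(1+x)^α = Σ_n (α(α-1)⋯(α-n+1)/n!)·xⁿ`. -/
noncomputable def binSeries (α : ℂ) : PowerSeries ℂ :=
  PowerSeries.mk fun n => (∏ i ∈ Finset.range n, (α - i)) / (n.factorial : ℂ)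

/-- The formal power `g^α = (1 + (g-1))^α` for `g` with constant term `1`. -/
noncomputable def fpow (g : PowerSeries ℂ) (α : ℂ) : PowerSeries ℂ :=
  pscomp (g - 1) (binSeries α)

variable {a b f g u v : PowerSeries ℂ}

lemma coeff_pow_eq_zero (ha : constantCoeff a = 0) {n k : ℕ} (h : n < k) :
    coeff n (a ^ k) = 0 := by
  have : (X : PowerSeries ℂ) ^ k ∣ a ^ k := pow_dvd_pow_of_dvd (X_dvd_iff.mpr ha) k
  exact X_pow_dvd_iff.mp this n h

lemma coeff_pscomp (n : ℕ) : coeff n (pscomp a f) =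
    ∑ k ∈ Finset.range (n + 1), coeff k f * coeff n (a ^ k) := by
  simp [pscomp]

lemma coeff_pscomp_of_lt (ha : constantCoeff a = 0) {n m : ℕ} (h : n < m) :
    coeff n (pscomp a f) = ∑ k ∈ Finset.range m, coeff k f * coeff n (a ^ k) := by
  rw [coeff_pscomp]
  apply Finset.sum_subset (by intro x hx; simp at *; omega)
  intro x _ hx
  simp only [Finset.mem_range, not_lt] at hx
  rw [coeff_pow_eq_zero ha (by omega), mul_zero]

lemma coeff_pscomp_eval₂ (ha : constantCoeff a = 0) {n m : ℕ} (h : n < m) :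
    coeff n (pscomp a f) = coeff n (Polynomial.eval₂ (C (R := ℂ)) a (trunc m f)) := by
  obtain ⟨m, rfl⟩ : ∃ m', m = m' + 1 := ⟨m - 1, by omega⟩
  rw [coeff_pscomp_of_lt ha h,
    Polynomial.eval₂_eq_sum_range' (C (R := ℂ)) (natDegree_trunc_lt f m) a, map_sum]
  apply Finset.sum_congr rfl
  intro k hk
  rw [coeff_trunc]
  simp only [Finset.mem_range] at hk
  rw [if_pos hk, coeff_C_mul]

lemma coeff_eval₂_of_low_zero (ha : constantCoeff a = 0) {n m : ℕ} (h : n < m)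
    (P : Polynomial ℂ) (hP : ∀ k < m, P.coeff k = 0) :
    coeff n (Polynomial.eval₂ (C (R := ℂ)) a P) = 0 := by
  rw [Polynomial.eval₂_eq_sum, Polynomial.sum, map_sum]
  apply Finset.sum_eq_zero
  intro k hk
  rcases lt_or_ge k m with hkm | hkm
  · simp [hP k hkm]
  · rw [coeff_C_mul, coeff_pow_eq_zero ha (by omega), mul_zero]

lemma pscomp_mul (ha : constantCoeff a = 0) (f g : PowerSeries ℂ) :
    pscomp a (f * g) = pscomp a f * pscomp a g := by
  ext n
  set m := n + 1 with hm
  have hn : n < m := by omega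
  rw [coeff_pscomp_eval₂ ha hn, coeff_mul]
  have key : ∀ p ∈ Finset.HasAntidiagonal.antidiagonal n,
      coeff p.1 (pscomp a f) * coeff p.2 (pscomp a g) =
      coeff p.1 (Polynomial.eval₂ (C (R := ℂ)) a (trunc m f)) *
      coeff p.2 (Polynomial.eval₂ (C (R := ℂ)) a (trunc m g)) := by
    intro p hp
    rw [Finset.HasAntidiagonal.mem_antidiagonal] at hp
    rw [coeff_pscomp_eval₂ ha (show p.1 < m by omega),
        coeff_pscomp_eval₂ ha (show p.2 < m by omega)]
  rw [Finset.sum_congr rfl key, ← coeff_mul, ← Polynomial.eval₂_mul]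
  have : Polynomial.eval₂ (C (R := ℂ)) a (trunc m (f*g)) =
      Polynomial.eval₂ (C (R := ℂ)) a (trunc m f * trunc m g) +
      Polynomial.eval₂ (C (R := ℂ)) a (trunc m (f*g) - trunc m f * trunc m g) := by
    rw [← Polynomial.eval₂_add]; ring_nf
  rw [this, map_add, coeff_eval₂_of_low_zero ha hn (trunc m (f * g) - trunc m f * trunc m g) ?_, add_zero]
  intro k hk
  rw [Polynomial.coeff_sub, Polynomial.coeff_mul, coeff_trunc, if_pos hk, coeff_mul]
  rw [sub_eq_zero]
  apply Finset.sum_congr rfl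
  intro p hp
  rw [Finset.HasAntidiagonal.mem_antidiagonal] at hp
  rw [coeff_trunc, coeff_trunc, if_pos (by omega), if_pos (by omega)]

lemma pscomp_one : pscomp a 1 = 1 := by
  ext n
  rw [coeff_pscomp]
  rcases Nat.eq_zero_or_pos n with rfl | hn
  · simp
  · rw [Finset.sum_eq_single 0] <;> simp_all [coeff_one, Nat.pos_iff_ne_zero]

lemma pscomp_add : pscomp a (f + g) = pscomp a f + pscomp a g := by
  ext n; simp [coeff_pscomp, Finset.sum_add_distrib, add_mul]

lemma pscomp_C (c : ℂ) : pscomp a (C c) = C c := by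
  ext n
  rw [coeff_pscomp]
  rcases Nat.eq_zero_or_pos n with rfl | hn
  · simp
  · rw [Finset.sum_eq_single 0] <;>
      simp_all [coeff_C, Nat.pos_iff_ne_zero]

lemma pscomp_X (ha : constantCoeff a = 0) : pscomp a X = a := by
  ext n
  rw [coeff_pscomp]
  rcases Nat.eq_zero_or_pos n with rfl | hn
  · simpa [coeff_X] using ha.symm
  · rw [Finset.sum_eq_single 1]
    · simp
    · intro k _ hk; simp [coeff_X, hk]
    · intro h; simp only [Finset.mem_range] at h; omega

lemma constantCoeff_pscomp : constantCoeff (pscomp a f) = constantCoeff f := by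
  have := coeff_pscomp (a := a) (f := f) 0
  simp only [Finset.range_one, Finset.sum_singleton, pow_zero, coeff_zero_eq_constantCoeff] at this
  simpa using this

lemma pscomp_pow (ha : constantCoeff a = 0) (k : ℕ) :
    pscomp a (f ^ k) = (pscomp a f) ^ k := by
  induction k with
  | zero => simpa using pscomp_one
  | succ k ih => rw [pow_succ, pow_succ, pscomp_mul ha, ih]

lemma pscomp_assoc (ha : constantCoeff a = 0) (hb : constantCoeff b = 0) :
    pscomp a (pscomp b f) = pscomp (pscomp a b) f := by
  ext n
  rw [coeff_pscomp, coeff_pscomp]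
  have step : ∀ k ∈ Finset.range (n+1), coeff k (pscomp b f) * coeff n (a ^ k)
      = ∑ j ∈ Finset.range (n+1), coeff j f * (coeff k (b ^ j) * coeff n (a ^ k)) := by
    intro k hk
    simp only [Finset.mem_range] at hk
    rw [coeff_pscomp_of_lt hb (show k < n + 1 by omega), Finset.sum_mul]
    simp [mul_assoc]
  rw [Finset.sum_congr rfl step, Finset.sum_comm]
  apply Finset.sum_congr rfl
  intro j _
  rw [← pscomp_pow ha, coeff_pscomp, Finset.mul_sum]

lemma derivative_eval₂ (P : Polynomial ℂ) :
    d⁄dX ℂ (Polynomial.eval₂ (C (R := ℂ)) a P) =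
      Polynomial.eval₂ (C (R := ℂ)) a (Polynomial.derivative P) * d⁄dX ℂ a := by
  induction P using Polynomial.induction_on' with
  | add p q hp hq =>
      rw [Polynomial.eval₂_add, map_add, hp, hq, Polynomial.derivative_add,
        Polynomial.eval₂_add, add_mul]
  | monomial k c =>
      rw [Polynomial.eval₂_monomial, Polynomial.derivative_monomial,
        Polynomial.eval₂_monomial]
      cases k with
      | zero => simp
      | succ k =>
          rw [Derivation.leibniz, Derivation.leibniz_pow, derivative_C]
          simp only [smul_zero, add_zero, smul_eq_mul, Nat.succ_sub_one, map_mul]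
          push_cast [map_add, map_one, map_natCast]
          ring

lemma derivative_pscomp (ha : constantCoeff a = 0) (f : PowerSeries ℂ) :
    d⁄dX ℂ (pscomp a f) = pscomp a (d⁄dX ℂ f) * d⁄dX ℂ a := by
  ext n
  rw [coeff_derivative, coeff_pscomp_eval₂ ha (show n + 1 < n + 2 by omega),
    ← coeff_derivative, derivative_eval₂, coeff_mul, coeff_mul]
  apply Finset.sum_congr rfl
  intro p hp
  rw [Finset.HasAntidiagonal.mem_antidiagonal] at hp
  rw [coeff_pscomp_eval₂ ha (show p.1 < n + 1 by omega),
    show trunc (n+1) (d⁄dX ℂ f) = Polynomial.derivative (trunc (n+2) f) from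
      trunc_derivative f (n+1)]

lemma ode_unique {g d f₁ f₂ : PowerSeries ℂ} (hg : constantCoeff g ≠ 0)
    (h1 : g * d⁄dX ℂ f₁ = d * f₁) (h2 : g * d⁄dX ℂ f₂ = d * f₂)
    (h0 : constantCoeff f₁ = constantCoeff f₂) : f₁ = f₂ := by
  set w := f₁ - f₂ with hw
  have hwe : g * d⁄dX ℂ w = d * w := by
    rw [hw, map_sub, mul_sub, mul_sub, h1, h2]
  have key : ∀ n, coeff n w = 0 := by
    intro n
    induction n using Nat.strong_induction_on with
    | _ n ih =>
      cases n with
      | zero => simpa [hw, sub_eq_zero, coeff_zero_eq_constantCoeff] using h0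
      | succ n =>
        have e := congrArg (coeff n) hwe
        rw [coeff_mul, coeff_mul] at e
        rw [Finset.sum_eq_single (0, n)] at e
        · rw [Finset.sum_eq_zero (fun p hp => by
            rw [Finset.HasAntidiagonal.mem_antidiagonal] at hp
            rw [ih p.2 (by omega), mul_zero])] at e
          rw [coeff_derivative] at e
          have hn1 : ((n : ℂ) + 1) ≠ 0 := Nat.cast_add_one_ne_zero n
          rcases mul_eq_zero.mp e with h | h
          · exact absurd (by simpa [coeff_zero_eq_constantCoeff] using h) hg
          rcases mul_eq_zero.mp h with h | h
          · exact h
          · exact absurd h hn1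
        · intro p hp hne
          rw [Finset.HasAntidiagonal.mem_antidiagonal] at hp
          rw [coeff_derivative, ih (p.2 + 1) (by
            rcases Nat.eq_zero_or_pos p.1 with h1' | h1'
            · exact absurd (Prod.ext h1' (by omega)) hne
            · omega), zero_mul, mul_zero]
        · intro h
          exact absurd (Finset.HasAntidiagonal.mem_antidiagonal.mpr (by simp)) h
  exact sub_eq_zero.mp (PowerSeries.ext key)

lemma coeff_binSeries (α : ℂ) (n : ℕ) :
    coeff n (binSeries α) = (∏ i ∈ Finset.range n, (α - i)) / (n.factorial : ℂ) := by
  simp [binSeries]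

lemma constantCoeff_binSeries (α : ℂ) : constantCoeff (binSeries α) = 1 := by
  simpa [coeff_zero_eq_constantCoeff] using coeff_binSeries α 0

lemma binSeries_rec (α : ℂ) (n : ℕ) :
    coeff (n + 1) (binSeries α) * (n + 1) = (α - n) * coeff n (binSeries α) := by
  rw [coeff_binSeries, coeff_binSeries, Finset.prod_range_succ, Nat.factorial_succ]
  have h1 : ((n.factorial : ℂ)) ≠ 0 := Nat.cast_ne_zero.mpr n.factorial_ne_zero
  have h2 : ((n : ℂ) + 1) ≠ 0 := Nat.cast_add_one_ne_zero n
  field_simp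
  push_cast
  ring

lemma binSeries_ode (α : ℂ) :
    (1 + X) * d⁄dX ℂ (binSeries α) = C α * binSeries α := by
  ext n
  rw [add_mul, one_mul, map_add, coeff_C_mul]
  cases n with
  | zero =>
      rw [coeff_derivative]
      have h0 := binSeries_rec α 0
      rw [coeff_zero_eq_constantCoeff, constantCoeff_binSeries] at h0
      simp only [coeff_zero_eq_constantCoeff, map_mul, constantCoeff_X, zero_mul, add_zero, constantCoeff_binSeries]
      push_cast at h0 ⊢
      linear_combination h0
  | succ n =>
      rw [coeff_derivative, coeff_succ_X_mul, coeff_derivative]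
      have r2 := binSeries_rec α (n + 1)
      push_cast at r2 ⊢
      linear_combination r2

lemma binSeries_mul (α β : ℂ) :
    binSeries α * binSeries β = binSeries (α + β) := by
  apply ode_unique (g := 1 + X) (d := C (α + β))
  · simp
  · rw [Derivation.leibniz]
    simp only [smul_eq_mul]
    calc (1 + X) * (binSeries α * d⁄dX ℂ (binSeries β) + binSeries β * d⁄dX ℂ (binSeries α))
        = binSeries α * ((1 + X) * d⁄dX ℂ (binSeries β))
          + binSeries β * ((1 + X) * d⁄dX ℂ (binSeries α)) := by ring
      _ = C (α + β) * (binSeries α * binSeries β) := by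
          rw [binSeries_ode, binSeries_ode, map_add]; ring
  · exact binSeries_ode (α + β)
  · simp [constantCoeff_binSeries]

lemma binSeries_zero : binSeries 0 = 1 := by
  ext n
  cases n with
  | zero => simp [coeff_binSeries, coeff_one]
  | succ n =>
      rw [coeff_binSeries, coeff_one, if_neg (Nat.succ_ne_zero n)]
      rw [Finset.prod_eq_zero (Finset.mem_range.mpr (Nat.succ_pos n)) (by simp)]
      simp

lemma pscomp_sub : pscomp a (f - g) = pscomp a f - pscomp a g := by
  ext n; simp [coeff_pscomp, sub_mul, Finset.sum_sub_distrib]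

lemma pscomp_zero_arg : pscomp 0 f = C (constantCoeff f) := by
  ext n
  rw [coeff_pscomp, coeff_C]
  cases n with
  | zero => simp
  | succ n =>
      rw [if_neg (Nat.succ_ne_zero n)]
      apply Finset.sum_eq_zero
      intro k hk
      cases k with
      | zero => simp [coeff_one]
      | succ k => simp [zero_pow (Nat.succ_ne_zero k)]

lemma constantCoeff_fpow (g : PowerSeries ℂ) (α : ℂ) :
    constantCoeff (fpow g α) = 1 := by
  rw [fpow, constantCoeff_pscomp, constantCoeff_binSeries]

lemma fpow_zero (g : PowerSeries ℂ) : fpow g 0 = 1 := by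
  rw [fpow, binSeries_zero, pscomp_one]

lemma fpow_one_base (α : ℂ) : fpow 1 α = 1 := by
  rw [fpow, sub_self, pscomp_zero_arg, constantCoeff_binSeries, map_one]

lemma fpow_add {g : PowerSeries ℂ} (hg : constantCoeff g = 1) (α β : ℂ) :
    fpow g α * fpow g β = fpow g (α + β) := by
  have h1 : constantCoeff (g - 1) = 0 := by simp [hg]
  rw [fpow, fpow, fpow, ← pscomp_mul h1, binSeries_mul]

lemma fpow_ode {g : PowerSeries ℂ} (hg : constantCoeff g = 1) (α : ℂ) :
    g * d⁄dX ℂ (fpow g α) = C α * d⁄dX ℂ g * fpow g α := by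
  have h1 : constantCoeff (g - 1) = 0 := by simp [hg]
  have hd : d⁄dX ℂ (g - 1) = d⁄dX ℂ g := by
    rw [map_sub]; simp
  rw [fpow, derivative_pscomp h1, hd]
  have key : g * pscomp (g - 1) (d⁄dX ℂ (binSeries α)) =
      C α * pscomp (g - 1) (binSeries α) := by
    have hg' : pscomp (g - 1) (1 + X) = g := by
      rw [pscomp_add, pscomp_one, pscomp_X h1]; ring
    have h2 := pscomp_mul h1 (1 + X) (d⁄dX ℂ (binSeries α))
    rw [hg', binSeries_ode, pscomp_mul h1, pscomp_C] at h2
    exact h2.symm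
  calc g * (pscomp (g - 1) (d⁄dX ℂ (binSeries α)) * d⁄dX ℂ g)
      = g * pscomp (g - 1) (d⁄dX ℂ (binSeries α)) * d⁄dX ℂ g := by ring
    _ = C α * pscomp (g - 1) (binSeries α) * d⁄dX ℂ g := by rw [key]
    _ = C α * d⁄dX ℂ g * pscomp (g - 1) (binSeries α) := by ring

lemma fpow_mul_base {u v : PowerSeries ℂ} (hu : constantCoeff u = 1)
    (hv : constantCoeff v = 1) (α : ℂ) :
    fpow (u * v) α = fpow u α * fpow v α := by
  have huv : constantCoeff (u * v) = 1 := by simp [hu, hv]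
  apply ode_unique (g := u * v) (d := C α * d⁄dX ℂ (u * v))
  · rw [huv]; exact one_ne_zero
  · rw [fpow_ode huv α]
  · rw [Derivation.leibniz, Derivation.leibniz]
    simp only [smul_eq_mul]
    linear_combination (u * fpow u α) * fpow_ode hv α + (v * fpow v α) * fpow_ode hu α
  · rw [constantCoeff_fpow, map_mul, constantCoeff_fpow, constantCoeff_fpow, mul_one]

lemma fpow_neg {u : PowerSeries ℂ} (hu : constantCoeff u = 1) (α : ℂ) :
    fpow u (-α) = fpow u⁻¹ α := by
  have h1 : fpow u α * fpow u (-α) = 1 := by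
    rw [fpow_add hu, add_neg_cancel, fpow_zero]
  have h2 : fpow u α * fpow u⁻¹ α = 1 := by
    rw [← fpow_mul_base hu (by rw [constantCoeff_inv, hu, inv_one]),
      PowerSeries.mul_inv_cancel u (by rw [hu]; exact one_ne_zero), fpow_one_base]
  calc fpow u (-α) = fpow u (-α) * (fpow u α * fpow u⁻¹ α) := by rw [h2, mul_one]
    _ = (fpow u α * fpow u (-α)) * fpow u⁻¹ α := by ring
    _ = fpow u⁻¹ α := by rw [h1, one_mul]

lemma pscomp_fpow (ha : constantCoeff a = 0) {u : PowerSeries ℂ}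
    (hu : constantCoeff u = 1) (α : ℂ) :
    pscomp a (fpow u α) = fpow (pscomp a u) α := by
  have h1 : constantCoeff (u - 1) = 0 := by simp [hu]
  rw [fpow, pscomp_assoc ha h1, pscomp_sub, pscomp_one, fpow]

lemma pscomp_X_arg : pscomp X f = f := by
  ext n
  rw [coeff_pscomp, Finset.sum_eq_single n]
  · simp [coeff_X_pow]
  · intro k hk hkn; simp [coeff_X_pow, hkn, Ne.symm hkn]
  · intro h; simp at h

/-- For fixed `ρ ∈ ℚ`, the Riordan arrays `(g^ρ, x·g)` with `g(0) = 1` form a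
subgroup: the set contains the identity, is closed under the Riordan product,
and the inverse `((g∘h)^{-ρ}, h)` of `(g^ρ, x·g)` again has the required form. -/
theorem power_rho_striped_subgroup (ρ : ℚ) :
    (∀ g₁ g₂ : PowerSeries ℂ,
        PowerSeries.constantCoeff g₁ = 1 → PowerSeries.constantCoeff g₂ = 1 →
        ∃ g₃ : PowerSeries ℂ, PowerSeries.constantCoeff g₃ = 1 ∧
          rprod (fpow g₁ (ρ : ℂ), PowerSeries.X * g₁)
              (fpow g₂ (ρ : ℂ), PowerSeries.X * g₂) =
            (fpow g₃ (ρ : ℂ), PowerSeries.X * g₃)) ∧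
    (fpow (1 : PowerSeries ℂ) (ρ : ℂ), (PowerSeries.X : PowerSeries ℂ) * 1) =
      ((1 : PowerSeries ℂ), PowerSeries.X) ∧
    (∀ g h : PowerSeries ℂ,
        PowerSeries.constantCoeff g = 1 → PowerSeries.constantCoeff h = 0 →
        pscomp h (PowerSeries.X * g) = PowerSeries.X →
        pscomp (PowerSeries.X * g) h = PowerSeries.X →
        rprod (fpow g (ρ : ℂ), PowerSeries.X * g)
            (fpow (pscomp h g) (-(ρ : ℂ)), h) = (1, PowerSeries.X) ∧
          ∃ g' : PowerSeries ℂ, PowerSeries.constantCoeff g' = 1 ∧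
            (fpow (pscomp h g) (-(ρ : ℂ)), h) =
              (fpow g' (ρ : ℂ), PowerSeries.X * g')) := by
  refine ⟨?_, ?_, ?_⟩
  · intro g₁ g₂ hg₁ hg₂
    set a := X * g₁ with hadef
    have ha : constantCoeff a = 0 := by simp [hadef]
    have hc : constantCoeff (pscomp a g₂) = 1 := by
      rw [constantCoeff_pscomp, hg₂]
    refine ⟨g₁ * pscomp a g₂, by rw [map_mul, hg₁, hc, one_mul], ?_⟩
    rw [rprod, Prod.mk.injEq]
    constructor
    · show fpow g₁ ρ * pscomp a (fpow g₂ ρ) = _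
      rw [pscomp_fpow ha hg₂, fpow_mul_base hg₁ hc]
    · show pscomp a (X * g₂) = X * (g₁ * pscomp a g₂)
      rw [pscomp_mul ha, pscomp_X ha, hadef]
      ring
  · rw [fpow_one_base, mul_one]
  · intro g h hg hh h1 h2
    have ha : constantCoeff (X * g) = 0 := by simp
    have hu : constantCoeff (pscomp h g) = 1 := by rw [constantCoeff_pscomp, hg]
    constructor
    · rw [rprod, Prod.mk.injEq]
      refine ⟨?_, h2⟩
      show fpow g ρ * pscomp (X * g) (fpow (pscomp h g) (-(ρ:ℂ))) = 1
      rw [pscomp_fpow ha hu, pscomp_assoc ha hh, h2, pscomp_X_arg,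
        fpow_add hg, add_neg_cancel, fpow_zero]
    · refine ⟨(pscomp h g)⁻¹, by rw [constantCoeff_inv, hu, inv_one], ?_⟩
      have hXu : h * pscomp h g = X := by
        have e := pscomp_mul hh X g
        rw [pscomp_X hh] at e
        rw [← e, h1]
      have huu : pscomp h g * (pscomp h g)⁻¹ = 1 :=
        PowerSeries.mul_inv_cancel _ (by rw [hu]; exact one_ne_zero)
      rw [Prod.mk.injEq]
      refine ⟨fpow_neg hu ρ, ?_⟩
      calc h = h * (pscomp h g * (pscomp h g)⁻¹) := by rw [huu, mul_one]
        _ = (h * pscomp h g) * (pscomp h g)⁻¹ := by ring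
        _ = X * (pscomp h g)⁻¹ := by rw [hXu]
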